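/- Let Ω ⊂ ℝ^d (d ≥ 1) be a bounded domain, p ∈ (0,1), β > 0, α ≥ 0, r > 0, ε ≥ 0 and ū ∈ L²(Ω). If v is a global minimizer over L²(Ω) of w ↦ (1/(2r))‖w − ū‖²_{L²} + β∫_Ω ψ_ε(w(x)²) dx + (α/2)‖w‖²_{L²}, then for a.e. x ∈ Ω either |v(x)| ≤ ε or |v(x)| ≥ (r·β·p·(1 − p)/(1 + α·r))^{1/(2−p)}. -/

import Mathlib

open MeasureTheory Filter Topology

/-- The smooth approximation `ψ_ε` of `t ↦ t^{p/2}`: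
`ψ_ε(t) = (p/2)·t/ε^{2−p} + (1 − p/2)·ε^p` for `0 ≤ t < ε²` and `ψ_ε(t) = t^{p/2}` for
`t ≥ ε²` (so `ψ_0(t) = t^{p/2}`). Exponents are real powers. -/
noncomputable def psi (p ε t : ℝ) : ℝ :=
  if t < ε ^ 2 then p / 2 * t / ε ^ (2 - p) + (1 - p / 2) * ε ^ p
  else t ^ (p / 2)

namespace ProxAux

noncomputable def gfun (p β α r ε u t : ℝ) : ℝ :=
  1 / (2 * r) * (t - u) ^ 2 + β * psi p ε (t ^ 2) + α / 2 * t ^ 2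
lemma continuous_rpow_const {q : ℝ} (hq : 0 < q) : Continuous fun x : ℝ => x ^ q :=
  continuous_iff_continuousAt.mpr fun x => Real.continuousAt_rpow_const x q (Or.inr hq.le)
lemma psi_sq {p ε y : ℝ} (hε : 0 ≤ ε) (hy : ε ≤ y) : psi p ε (y ^ 2) = y ^ p := by
  have hy0 : 0 ≤ y := hε.trans hy
  unfold psi
  rw [if_neg (by push_neg; exact pow_le_pow_left₀ hε hy 2)]
  rw [← Real.rpow_natCast y 2, ← Real.rpow_mul hy0]
  congr 1; ring

lemma key_pos {p β α r ε : ℝ} (hp0 : 0 < p) (hp1 : p < 1) (hβ : 0 < β) (hα : 0 ≤ α)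
    (hr : 0 < r) (hε : 0 ≤ ε) (u z : ℝ)
    (hz1 : ε < z) (hz2 : z < (r * β * p * (1 - p) / (1 + α * r)) ^ ((1:ℝ) / (2 - p))) :
    min (gfun p β α r ε u ε)
      (gfun p β α r ε u ((r * β * p * (1 - p) / (1 + α * r)) ^ ((1:ℝ) / (2 - p))))
      < gfun p β α r ε u z := by
  set κ := r * β * p * (1 - p) / (1 + α * r) with hκ
  set c := κ ^ ((1:ℝ)/(2-p)) with hc
  have hκ0 : 0 < κ := by
    apply div_pos
    · have : 0 < 1 - p := by linarith
      positivity
    · nlinarith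
  have hc0 : 0 < c := Real.rpow_pos_of_pos hκ0 _
  have hc2p : c ^ (2 - p) = κ := by
    rw [hc, ← Real.rpow_mul hκ0.le, one_div_mul_cancel (by intro hcon; linarith : (2:ℝ) - p ≠ 0),
      Real.rpow_one]
  set h : ℝ → ℝ := fun y => 1/(2*r)*(y-u)^2 + β * y ^ p + α/2 * y^2 with hh
  have hd1 : ∀ y : ℝ, y ≠ 0 →
      HasDerivAt h ((y - u)/r + β * p * y ^ (p-1) + α * y) y := by
    intro y hy
    have A : HasDerivAt (fun z : ℝ => (z - u)^2) (2*(y-u)) y := by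
      simpa using ((hasDerivAt_id y).sub_const u).fun_pow 2
    have B : HasDerivAt (fun z : ℝ => z ^ p) (p * y ^ (p-1)) y :=
      Real.hasDerivAt_rpow_const (Or.inl hy)
    have C : HasDerivAt (fun z : ℝ => z^2) (2*y) y := by simpa using (hasDerivAt_id y).fun_pow 2
    have := ((A.const_mul (1/(2*r))).add (B.const_mul β)).add (C.const_mul (α/2))
    refine this.congr_deriv ?_
    field_simp
  have hd2 : ∀ y : ℝ, y ≠ 0 →
      HasDerivAt (fun y => (y - u)/r + β * p * y ^ (p-1) + α * y)
        (1/r + β * p * ((p-1) * y ^ (p-2)) + α) y := by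
    intro y hy
    have A : HasDerivAt (fun z : ℝ => (z - u)/r) (1/r) y := by
      simpa using ((hasDerivAt_id y).sub_const u).div_const r
    have B := Real.hasDerivAt_rpow_const (x := y) (p := p-1) (Or.inl hy)
    rw [show p-1-1 = p-2 by ring] at B
    have C : HasDerivAt (fun z : ℝ => α * z) α y := by simpa using (hasDerivAt_id y).const_mul α
    exact (A.add (B.const_mul (β*p))).add C
  have hcont : ContinuousOn h (Set.Icc ε c) := by
    apply Continuous.continuousOn
    have hp : Continuous fun y : ℝ => y ^ p := continuous_rpow_const hp0
    exact ((continuous_const.mul ((continuous_id.sub continuous_const).pow 2)).add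
      (continuous_const.mul hp)).add (continuous_const.mul (continuous_id.pow 2))
  have hderiv2 : ∀ y ∈ interior (Set.Icc ε c), deriv^[2] h y < 0 := by
    intro y hy
    rw [interior_Icc] at hy
    have hy0 : 0 < y := lt_of_le_of_lt hε hy.1
    have hevent : deriv h =ᶠ[nhds y] fun z => (z - u)/r + β * p * z ^ (p-1) + α * z := by
      filter_upwards [Ioi_mem_nhds hy0] with z hz
      exact (hd1 z (ne_of_gt hz)).deriv
    have heq : deriv^[2] h y = 1/r + β * p * ((p-1) * y ^ (p-2)) + α := by
      show deriv (deriv h) y = _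
      rw [Filter.EventuallyEq.deriv_eq hevent]
      exact (hd2 y (ne_of_gt hy0)).deriv
    rw [heq]
    have hA : 0 < y ^ (2 - p) := Real.rpow_pos_of_pos hy0 _
    have hAκ : y ^ (2-p) < κ := by
      calc y ^ (2-p) < c ^ (2-p) := Real.rpow_lt_rpow hy0.le hy.2 (by linarith)
      _ = κ := hc2p
    have hinv : y ^ (p - 2) = (y ^ (2-p))⁻¹ := by
      rw [← Real.rpow_neg hy0.le]; congr 1; ring
    rw [hinv]
    have hκeq : (1/r + α) * κ = β * p * (1 - p) := by
      rw [hκ]; field_simp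
    have hstep : (1/r + α) * (y ^ (2-p)) < β * p * (1-p) := by
      calc (1/r + α) * (y ^ (2-p)) < (1/r + α) * κ :=
            mul_lt_mul_of_pos_left hAκ (by positivity)
        _ = β * p * (1-p) := hκeq
    have hdiv : 1/r + α < β * p * (1-p) * (y ^ (2-p))⁻¹ := by
      rw [← div_eq_mul_inv]
      exact (lt_div_iff₀ hA).mpr (by linarith)
    have h9 : β*p*((p-1)*(y ^ (2-p))⁻¹) = -(β*p*(1-p)*(y ^ (2-p))⁻¹) := by ring
    linarith
  have hconc : StrictConcaveOn ℝ (Set.Icc ε c) h :=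
    strictConcaveOn_of_deriv2_neg (convex_Icc _ _) hcont hderiv2
  have hεc : ε < c := hz1.trans hz2
  set lam := (c - z)/(c - ε) with hlamdef
  set lmu := (z - ε)/(c - ε) with hmudef
  have hlam : 0 < lam := div_pos (by linarith) (by linarith)
  have hmu : 0 < lmu := div_pos (by linarith) (by linarith)
  have hsum : lam + lmu = 1 := by
    rw [hlamdef, hmudef, ← add_div, div_eq_one_iff_eq (by linarith)]; ring
  have hcomb : lam • ε + lmu • c = z := by
    have hne : c - ε ≠ 0 := by linarith
    simp only [smul_eq_mul, hlamdef, hmudef]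
    field_simp
    ring
  have hlt := hconc.2 (Set.left_mem_Icc.mpr hεc.le) (Set.right_mem_Icc.mpr hεc.le)
    (ne_of_lt hεc) hlam hmu hsum
  rw [hcomb] at hlt
  simp only [smul_eq_mul] at hlt
  have hgeq : ∀ y : ℝ, ε ≤ y → gfun p β α r ε u y = h y := by
    intro y hy
    simp only [hh]
    unfold gfun
    rw [psi_sq hε hy]
  have hminle : min (h ε) (h c) ≤ lam * h ε + lmu * h c := by
    have e1 : min (h ε) (h c) = lam * min (h ε) (h c) + lmu * min (h ε) (h c) := by
      rw [← add_mul, hsum, one_mul]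
    rw [e1]
    have := min_le_left (h ε) (h c)
    have := min_le_right (h ε) (h c)
    gcongr <;> first | exact hlam.le | exact hmu.le | assumption
  rw [hgeq ε le_rfl, hgeq c hεc.le, hgeq z hz1.le]
  exact lt_of_le_of_lt hminle hlt

lemma gfun_neg (p β α r ε u z : ℝ) : gfun p β α r ε u (-z) = gfun p β α r ε (-u) z := by
  unfold gfun
  rw [neg_sq]
  ring_nf

noncomputable def sgn (t : ℝ) : ℝ := if 0 ≤ t then 1 else -1

lemma measurable_sgn : Measurable sgn :=
  Measurable.ite (measurableSet_le measurable_const measurable_id)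
    measurable_const measurable_const

lemma abs_sgn (t : ℝ) : |sgn t| = 1 := by unfold sgn; split_ifs <;> simp

lemma key_gap {p β α r ε : ℝ} (hp0 : 0 < p) (hp1 : p < 1) (hβ : 0 < β) (hα : 0 ≤ α)
    (hr : 0 < r) (hε : 0 ≤ ε) (u t : ℝ) (h1 : ε < |t|)
    (h2 : |t| < (r * β * p * (1 - p) / (1 + α * r)) ^ ((1:ℝ) / (2 - p))) :
    min (gfun p β α r ε u (ε * sgn t))
      (gfun p β α r ε u
        ((r * β * p * (1 - p) / (1 + α * r)) ^ ((1:ℝ) / (2 - p)) * sgn t))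
      < gfun p β α r ε u t := by
  unfold sgn
  by_cases h : 0 ≤ t
  · simp only [if_pos h, mul_one]
    rw [abs_of_nonneg h] at h1 h2
    exact key_pos hp0 hp1 hβ hα hr hε u t h1 h2
  · simp only [if_neg h, mul_neg_one]
    rw [abs_of_neg (not_le.mp h)] at h1 h2
    rw [gfun_neg, gfun_neg, show t = -(-t) by ring, gfun_neg]
    exact key_pos hp0 hp1 hβ hα hr hε (-u) (-t) h1 h2


lemma measurable_psi (p ε : ℝ) (hp : 0 < p) : Measurable (psi p ε) := by
  unfold psi
  exact Measurable.ite (measurableSet_lt measurable_id measurable_const)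
    (by fun_prop) ((continuous_rpow_const (by linarith)).measurable)

lemma psi_nonneg {p ε t : ℝ} (hp0 : 0 < p) (hp1 : p < 1) (hε : 0 ≤ ε) (ht : 0 ≤ t) :
    0 ≤ psi p ε t := by
  unfold psi
  split
  · have h1 : (0:ℝ) ≤ p / 2 * t / ε ^ (2 - p) := by
      apply div_nonneg (by positivity) (Real.rpow_nonneg hε _)
    have h2 : (0:ℝ) ≤ (1 - p / 2) * ε ^ p := by
      apply mul_nonneg (by linarith) (Real.rpow_nonneg hε _)
    linarith
  · exact Real.rpow_nonneg ht _

lemma psi_le {p ε t : ℝ} (hp0 : 0 < p) (hp1 : p < 1) (hε : 0 ≤ ε) (ht : 0 ≤ t) :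
    psi p ε t ≤ ε ^ p + 1 + t := by
  unfold psi
  split_ifs with h
  · have hε0 : 0 < ε := by
      rcases hε.lt_or_eq with h' | h'
      · exact h'
      · exfalso; rw [← h'] at h; simp at h; linarith
    have h2 : t / ε ^ (2 - p) ≤ ε ^ p := by
      rw [div_le_iff₀ (Real.rpow_pos_of_pos hε0 _)]
      have : ε ^ p * ε ^ (2 - p) = ε ^ 2 := by
        rw [← Real.rpow_add hε0]
        norm_num
      rw [this]; exact h.le
    have hεp : 0 ≤ ε ^ p := Real.rpow_nonneg hε _
    have h3 : p / 2 * t / ε ^ (2 - p) ≤ p / 2 * ε ^ p := by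
      rw [mul_div_assoc]
      apply mul_le_mul_of_nonneg_left h2 (by linarith)
    nlinarith
  · rcases le_or_gt t 1 with h1 | h1
    · have : t ^ (p / 2) ≤ 1 := Real.rpow_le_one ht h1 (by linarith)
      have := Real.rpow_nonneg hε p
      linarith
    · have : t ^ (p / 2) ≤ t ^ (1:ℝ) :=
        Real.rpow_le_rpow_of_exponent_le h1.le (by linarith)
      rw [Real.rpow_one] at this
      have := Real.rpow_nonneg hε p
      linarith

end ProxAux

/-- if `v` globally minimizes
`w ↦ (1/(2r))‖w − ū‖² + β∫_Ω ψ_ε(w²) dx + (α/2)‖w‖²` over `L²(Ω)`, then a.e. either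
`|v| ≤ ε` or `|v| ≥ (rβp(1 − p)/(1 + αr))^{1/(2−p)}`. -/
theorem prox_sparsity
    {d : ℕ} (hd : 1 ≤ d) (Ω : Set (EuclideanSpace ℝ (Fin d)))
    (hΩ_open : IsOpen Ω) (hΩ_conn : IsConnected Ω) (hΩ_bdd : Bornology.IsBounded Ω)
    (p β α r ε : ℝ) (hp0 : 0 < p) (hp1 : p < 1) (hβ : 0 < β) (hα : 0 ≤ α)
    (hr : 0 < r) (hε : 0 ≤ ε)
    (ubar v : Lp ℝ 2 (volume.restrict Ω))
    (hmin : ∀ w : Lp ℝ 2 (volume.restrict Ω),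
      1 / (2 * r) * ‖v - ubar‖ ^ 2 + β * ∫ x, psi p ε (v x ^ 2) ∂(volume.restrict Ω) +
          α / 2 * ‖v‖ ^ 2 ≤
        1 / (2 * r) * ‖w - ubar‖ ^ 2 + β * ∫ x, psi p ε (w x ^ 2) ∂(volume.restrict Ω) +
          α / 2 * ‖w‖ ^ 2) :
    ∀ᵐ x ∂(volume.restrict Ω),
      |v x| ≤ ε ∨ (r * β * p * (1 - p) / (1 + α * r)) ^ ((1 : ℝ) / (2 - p)) ≤ |v x| := by
  classical
  haveI hfinμ : IsFiniteMeasure (volume.restrict Ω) := ⟨by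
    rw [Measure.restrict_apply_univ]; exact hΩ_bdd.measure_lt_top⟩
  set c := (r * β * p * (1 - p) / (1 + α * r)) ^ ((1 : ℝ) / (2 - p)) with hcdef
  have hc0 : 0 < c := by
    apply Real.rpow_pos_of_pos
    apply div_pos
    · have h1 : 0 < 1 - p := by linarith
      positivity
    · nlinarith
  have hVm : Measurable (⇑v : _ → ℝ) := (Lp.stronglyMeasurable v).measurable
  have hUm : Measurable (⇑ubar : _ → ℝ) := (Lp.stronglyMeasurable ubar).measurable
  have hsgm : Measurable (fun x => ProxAux.sgn (v x)) :=
    ProxAux.measurable_sgn.comp hVm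
  set A : Set (EuclideanSpace ℝ (Fin d)) := {x | ε < |v x| ∧ |v x| < c} with hA
  have hAm : MeasurableSet A := by
    have : A = {x | ε < |v x|} ∩ {x | |v x| < c} := rfl
    rw [this]
    exact (measurableSet_lt measurable_const hVm.abs).inter
      (measurableSet_lt hVm.abs measurable_const)
  -- measurability of gfun compositions
  have hgm : ∀ f : (EuclideanSpace ℝ (Fin d)) → ℝ, Measurable f →
      Measurable (fun x => ProxAux.gfun p β α r ε (ubar x) (f x)) := by
    intro f hf
    unfold ProxAux.gfun
    exact ((((hf.sub hUm).pow_const 2).const_mul (1/(2*r))).add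
      (((ProxAux.measurable_psi p ε hp0).comp (hf.pow_const 2)).const_mul β)).add
      ((hf.pow_const 2).const_mul (α/2))
  set wf : (EuclideanSpace ℝ (Fin d)) → ℝ := fun x => if x ∈ A then
      (if ProxAux.gfun p β α r ε (ubar x) (ε * ProxAux.sgn (v x)) ≤
          ProxAux.gfun p β α r ε (ubar x) (c * ProxAux.sgn (v x))
        then ε * ProxAux.sgn (v x) else c * ProxAux.sgn (v x)) else v x with hwfdef
  have hwfm : Measurable wf := by
    refine Measurable.ite hAm ?_ hVm
    exact Measurable.ite
      (measurableSet_le (hgm _ (hsgm.const_mul ε)) (hgm _ (hsgm.const_mul c)))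
      (hsgm.const_mul ε) (hsgm.const_mul c)
  -- pointwise comparison
  have hwf_le : ∀ x, ProxAux.gfun p β α r ε (ubar x) (wf x) ≤
      ProxAux.gfun p β α r ε (ubar x) (v x) := by
    intro x
    by_cases hx : x ∈ A
    · have hgap := ProxAux.key_gap hp0 hp1 hβ hα hr hε (ubar x) (v x) hx.1 hx.2
      rw [← hcdef] at hgap
      simp only [hwfdef, if_pos hx]
      by_cases hcnd : ProxAux.gfun p β α r ε (ubar x) (ε * ProxAux.sgn (v x)) ≤
          ProxAux.gfun p β α r ε (ubar x) (c * ProxAux.sgn (v x))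
      · rw [if_pos hcnd]
        rw [min_eq_left hcnd] at hgap
        exact hgap.le
      · rw [if_neg hcnd]
        rw [min_eq_right (le_of_not_ge hcnd)] at hgap
        exact hgap.le
    · simp only [hwfdef, if_neg hx]
      exact le_rfl
  have hwf_lt : ∀ x ∈ A, ProxAux.gfun p β α r ε (ubar x) (wf x) <
      ProxAux.gfun p β α r ε (ubar x) (v x) := by
    intro x hx
    have hgap := ProxAux.key_gap hp0 hp1 hβ hα hr hε (ubar x) (v x) hx.1 hx.2
    rw [← hcdef] at hgap
    simp only [hwfdef, if_pos hx]
    by_cases hcnd : ProxAux.gfun p β α r ε (ubar x) (ε * ProxAux.sgn (v x)) ≤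
        ProxAux.gfun p β α r ε (ubar x) (c * ProxAux.sgn (v x))
    · rw [if_pos hcnd]
      rw [min_eq_left hcnd] at hgap
      exact hgap
    · rw [if_neg hcnd]
      rw [min_eq_right (le_of_not_ge hcnd)] at hgap
      exact hgap
  -- membership in L²
  have hwf_bd : ∀ x, ‖wf x‖ ≤ ‖‖v x‖ + c‖ := by
    intro x
    have hnn : (0:ℝ) ≤ ‖v x‖ + c := by positivity
    rw [Real.norm_eq_abs (‖v x‖ + c), abs_of_nonneg hnn, Real.norm_eq_abs, Real.norm_eq_abs]
    by_cases hx : x ∈ A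
    · have h1 : ε < |v x| := hx.1
      simp only [hwfdef, if_pos hx]
      by_cases hcnd : ProxAux.gfun p β α r ε (ubar x) (ε * ProxAux.sgn (v x)) ≤
          ProxAux.gfun p β α r ε (ubar x) (c * ProxAux.sgn (v x))
      · rw [if_pos hcnd, abs_mul, ProxAux.abs_sgn, mul_one, abs_of_nonneg hε]
        have := abs_nonneg (v x)
        linarith
      · rw [if_neg hcnd, abs_mul, ProxAux.abs_sgn, mul_one, abs_of_nonneg hc0.le]
        have := abs_nonneg (v x)
        linarith
    · simp only [hwfdef, if_neg hx]
      linarith [hc0.le]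
  have hwmem : MemLp wf 2 (volume.restrict Ω) :=
    MemLp.of_le ((Lp.memLp v).norm.add (memLp_const c)) hwfm.aestronglyMeasurable
      (Filter.Eventually.of_forall hwf_bd)
  set w : Lp ℝ 2 (volume.restrict Ω) := hwmem.toLp wf with hwdef
  have hwcoe : ⇑w =ᵐ[volume.restrict Ω] wf := hwmem.coeFn_toLp
  -- norms as integrals
  have norm_sq : ∀ f : Lp ℝ 2 (volume.restrict Ω), ‖f‖ ^ 2 = ∫ x, (f x) ^ 2 ∂(volume.restrict Ω) := by
    intro f
    rw [← real_inner_self_eq_norm_sq, L2.inner_def]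
    refine integral_congr_ae (Filter.Eventually.of_forall fun x => ?_)
    simp [RCLike.inner_apply, sq]
  -- integrability of psi terms
  have int_psi : ∀ f : (EuclideanSpace ℝ (Fin d)) → ℝ, Measurable f → MemLp f 2 (volume.restrict Ω) →
      Integrable (fun x => psi p ε (f x ^ 2)) (volume.restrict Ω) := by
    intro f hf hf2
    apply Integrable.mono' ((integrable_const (ε ^ p + 1)).add hf2.integrable_sq)
    · exact ((ProxAux.measurable_psi p ε hp0).comp (hf.pow_const 2)).aestronglyMeasurable
    · refine Filter.Eventually.of_forall fun x => ?_
      rw [Real.norm_eq_abs, abs_of_nonneg (ProxAux.psi_nonneg hp0 hp1 hε (sq_nonneg _))]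
      have := ProxAux.psi_le hp0 hp1 hε (sq_nonneg (f x))
      simp only [Pi.add_apply]
      linarith
  have intG : ∀ f : (EuclideanSpace ℝ (Fin d)) → ℝ, Measurable f → MemLp f 2 (volume.restrict Ω) →
      Integrable (fun x => ProxAux.gfun p β α r ε (ubar x) (f x)) (volume.restrict Ω) := by
    intro f hf hf2
    have i1 : Integrable (fun x => (f x - ubar x)^2) (volume.restrict Ω) := by
      have := (hf2.sub (Lp.memLp ubar)).integrable_sq
      exact this.congr (Filter.Eventually.of_forall fun x => rfl)
    have j1 : Integrable (fun x => 1/(2*r) * (f x - ubar x)^2) (volume.restrict Ω) :=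
      i1.const_mul _
    have j2 : Integrable (fun x => β * psi p ε (f x ^ 2)) (volume.restrict Ω) :=
      (int_psi f hf hf2).const_mul _
    have j3 : Integrable (fun x => α/2 * f x ^ 2) (volume.restrict Ω) :=
      hf2.integrable_sq.const_mul _
    have j12 : Integrable (fun x => 1/(2*r) * (f x - ubar x)^2 + β * psi p ε (f x ^ 2))
      (volume.restrict Ω) := j1.add j2
    have j123 : Integrable (fun x => (1/(2*r) * (f x - ubar x)^2 + β * psi p ε (f x ^ 2))
      + α/2 * f x ^ 2) (volume.restrict Ω) := j12.add j3
    unfold ProxAux.gfun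
    exact j123
  have expand : ∀ f : (EuclideanSpace ℝ (Fin d)) → ℝ, Measurable f → MemLp f 2 (volume.restrict Ω) →
      1 / (2*r) * ∫ x, (f x - ubar x)^2 ∂(volume.restrict Ω) + β * ∫ x, psi p ε (f x ^ 2) ∂(volume.restrict Ω)
          + α/2 * ∫ x, f x ^ 2 ∂(volume.restrict Ω)
        = ∫ x, ProxAux.gfun p β α r ε (ubar x) (f x) ∂(volume.restrict Ω) := by
    intro f hf hf2
    have i1 : Integrable (fun x => (f x - ubar x)^2) (volume.restrict Ω) := by
      have := (hf2.sub (Lp.memLp ubar)).integrable_sq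
      exact this.congr (Filter.Eventually.of_forall fun x => rfl)
    have j1 : Integrable (fun x => 1/(2*r) * (f x - ubar x)^2) (volume.restrict Ω) :=
      i1.const_mul _
    have j2 : Integrable (fun x => β * psi p ε (f x ^ 2)) (volume.restrict Ω) :=
      (int_psi f hf hf2).const_mul _
    have j3 : Integrable (fun x => α/2 * f x ^ 2) (volume.restrict Ω) :=
      hf2.integrable_sq.const_mul _
    have j12 : Integrable (fun x => 1/(2*r) * (f x - ubar x)^2 + β * psi p ε (f x ^ 2))
      (volume.restrict Ω) := j1.add j2
    unfold ProxAux.gfun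
    rw [eq_comm]
    rw [integral_add j12 j3, integral_add j1 j2,
      integral_const_mul, integral_const_mul, integral_const_mul]
  -- rewrite minimality
  have hmin' := hmin w
  have e1 : ‖v - ubar‖ ^ 2 = ∫ x, (v x - ubar x)^2 ∂(volume.restrict Ω) := by
    rw [norm_sq]
    refine integral_congr_ae ?_
    filter_upwards [Lp.coeFn_sub v ubar] with x hx
    rw [hx, Pi.sub_apply]
  have e2 : ‖(v : Lp ℝ 2 (volume.restrict Ω))‖ ^ 2 = ∫ x, v x ^ 2 ∂(volume.restrict Ω) := norm_sq v
  have e3 : ‖w - ubar‖ ^ 2 = ∫ x, (wf x - ubar x)^2 ∂(volume.restrict Ω) := by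
    rw [norm_sq]
    refine integral_congr_ae ?_
    filter_upwards [Lp.coeFn_sub w ubar, hwcoe] with x h1 h2
    rw [h1, Pi.sub_apply, h2]
  have e4 : ∫ x, psi p ε (w x ^ 2) ∂(volume.restrict Ω)
      = ∫ x, psi p ε (wf x ^ 2) ∂(volume.restrict Ω) := by
    refine integral_congr_ae ?_
    filter_upwards [hwcoe] with x hx
    rw [hx]
  have e5 : ‖w‖ ^ 2 = ∫ x, wf x ^ 2 ∂(volume.restrict Ω) := by
    rw [norm_sq]
    refine integral_congr_ae ?_
    filter_upwards [hwcoe] with x hx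
    rw [hx]
  rw [e1, e2, e3, e4, e5, expand _ hVm (Lp.memLp v), expand wf hwfm hwmem] at hmin'
  -- conclude
  have intGv := intG _ hVm (Lp.memLp v)
  have intGw := intG wf hwfm hwmem
  have hD0 : (0 : (EuclideanSpace ℝ (Fin d)) → ℝ) ≤ fun x =>
      ProxAux.gfun p β α r ε (ubar x) (v x) - ProxAux.gfun p β α r ε (ubar x) (wf x) :=
    fun x => sub_nonneg.mpr (hwf_le x)
  have hint0 : ∫ x, (ProxAux.gfun p β α r ε (ubar x) (v x)
      - ProxAux.gfun p β α r ε (ubar x) (wf x)) ∂(volume.restrict Ω) = 0 := by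
    rw [integral_sub intGv intGw]
    have h1 : (0:ℝ) ≤ ∫ x, (ProxAux.gfun p β α r ε (ubar x) (v x)
        - ProxAux.gfun p β α r ε (ubar x) (wf x)) ∂(volume.restrict Ω) := integral_nonneg hD0
    rw [integral_sub intGv intGw] at h1
    linarith
  have hae := (integral_eq_zero_iff_of_nonneg hD0 (intGv.sub intGw)).mp hint0
  filter_upwards [hae] with x hx
  by_contra hcon
  push_neg at hcon
  have hxA : x ∈ A := ⟨hcon.1, hcon.2⟩
  have := hwf_lt x hxA
  simp only [Pi.zero_apply] at hx
  linarith
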